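/- For any φ > 0, e^{t²/2} t^{c²} = n/(2π)^{c²/2} with c > 1 implies (1/√(2π)) · (c/t − c³/t³) · e^{−t²/(2c²)} ≥ (1 − o(1)) · n^{−1/c²} as n → ∞. -/

import Mathlib

open Real Filter

/-- If `t n > 0` solves `e^{t²/2} t^{c²} = n/(2π)^{c²/2}` with `c > 1`, then
`(1/√(2π))·(c/t − c³/t³)·e^{−t²/(2c²)} ≥ (1 − o(1))·n^{−1/c²}` as `n → ∞`. -/
theorem stmt_19 (c : ℝ) (hc : 1 < c) (t : ℕ → ℝ) (hpos : ∀ n, 1 ≤ n → 0 < t n)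
    (heq : ∀ n, 1 ≤ n →
      Real.exp ((t n) ^ 2 / 2) * (t n) ^ (c ^ 2 : ℝ)
        = (n : ℝ) / (2 * π) ^ ((c ^ 2 : ℝ) / 2)) :
    ∃ ε : ℕ → ℝ, Tendsto ε atTop (nhds 0) ∧
      ∀ᶠ n in atTop,
        (1 - ε n) * (n : ℝ) ^ (-(1 / c ^ 2) : ℝ)
          ≤ (1 / Real.sqrt (2 * π)) * (c / t n - c ^ 3 / (t n) ^ 3) *
              Real.exp (-(t n) ^ 2 / (2 * c ^ 2)) := by
  have hc0 : (0:ℝ) < c := lt_trans one_pos hc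
  have hc2 : (0:ℝ) < c ^ 2 := by positivity
  have h2π : (0:ℝ) < 2 * π := by positivity
  have h2πc : (0:ℝ) < (2 * π) ^ ((c ^ 2 : ℝ) / 2) := Real.rpow_pos_of_pos h2π _
  have hsq : (0:ℝ) < Real.sqrt (2 * π) := Real.sqrt_pos.mpr h2π
  refine ⟨fun _ => 0, tendsto_const_nhds, ?_⟩
  set T : ℝ := c * Real.sqrt (c / (c - 1)) with hT
  have hd : (0:ℝ) < c / (c - 1) := div_pos hc0 (by linarith)
  have hT0 : 0 < T := mul_pos hc0 (Real.sqrt_pos.mpr hd)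
  have hTsq : T ^ 2 = c ^ 3 / (c - 1) := by
    rw [hT, mul_pow, Real.sq_sqrt hd.le]
    field_simp
  obtain ⟨N, hN⟩ := exists_nat_gt
    ((2 * π) ^ ((c ^ 2 : ℝ) / 2) * (Real.exp (T ^ 2 / 2) * T ^ (c ^ 2 : ℝ)))
  filter_upwards [eventually_ge_atTop (max N 1)] with n hn
  have hn1 : 1 ≤ n := le_trans (le_max_right _ _) hn
  have hnN : N ≤ n := le_trans (le_max_left _ _) hn
  set s := t n with hs
  have hs0 : 0 < s := hpos n hn1
  have hEq := heq n hn1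
  -- t n ≥ T
  have hTt : T ≤ s := by
    by_contra h
    push_neg at h
    have h1 : Real.exp (s ^ 2 / 2) * s ^ (c ^ 2 : ℝ)
        ≤ Real.exp (T ^ 2 / 2) * T ^ (c ^ 2 : ℝ) := by
      apply mul_le_mul
      · exact Real.exp_le_exp.mpr (by nlinarith)
      · exact Real.rpow_le_rpow hs0.le h.le hc2.le
      · positivity
      · positivity
    rw [hEq, div_le_iff₀ h2πc] at h1
    have h2 : (N:ℝ) ≤ (n:ℝ) := Nat.cast_le.mpr hnN
    nlinarith [hN]
  have hn0 : (0:ℝ) < (n:ℝ) := by exact_mod_cast Nat.lt_of_lt_of_le Nat.zero_lt_one hn1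
  set P : ℝ := (n:ℝ) ^ ((1:ℝ) / c ^ 2) with hPdef
  have hP0 : 0 < P := Real.rpow_pos_of_pos hn0 _
  set E : ℝ := Real.exp (s ^ 2 / (2 * c ^ 2)) with hEdef
  have hE0 : 0 < E := Real.exp_pos _
  -- key identity: E * s = P / √(2π)
  have hkey : E * s = P / Real.sqrt (2 * π) := by
    have h0 := congrArg (fun x : ℝ => x ^ ((1:ℝ) / c ^ 2)) hEq
    rw [Real.mul_rpow (Real.exp_pos _).le (Real.rpow_nonneg hs0.le _),
      ← Real.exp_mul, ← Real.rpow_mul hs0.le,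
      Real.div_rpow (Nat.cast_nonneg n) h2πc.le,
      ← Real.rpow_mul h2π.le] at h0
    have e0 : (c ^ 2 : ℝ) * (1 / c ^ 2) = 1 := by field_simp
    have e1 : (t n) ^ 2 / 2 * (1 / c ^ 2) = s ^ 2 / (2 * c ^ 2) := by
      rw [← hs]; field_simp
    have e2 : (c ^ 2 : ℝ) / 2 * (1 / c ^ 2) = 1 / 2 := by field_simp
    rw [e0, e1, e2, Real.rpow_one, ← Real.sqrt_eq_rpow] at h0
    rw [hEdef, hPdef, h0]
  have hkey' : E * s * Real.sqrt (2 * π) = P := by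
    rw [hkey, div_mul_cancel₀ _ hsq.ne']
  -- rewrite the exponential
  have hexp : Real.exp (-s ^ 2 / (2 * c ^ 2)) = E⁻¹ := by
    rw [neg_div, Real.exp_neg, hEdef]
  have hrpow : (n:ℝ) ^ (-(1 / c ^ 2) : ℝ) = P⁻¹ := by
    rw [Real.rpow_neg hn0.le, hPdef]
  rw [hexp, hrpow]
  have hEs : (1 / Real.sqrt (2 * π)) * (c / s - c ^ 3 / s ^ 3) * E⁻¹
      = (c - c ^ 3 / s ^ 2) / P := by
    rw [← hkey']
    field_simp
  rw [hEs]
  clear_value s P E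
  clear hEq hkey hkey' hexp hrpow hEs hEdef hPdef heq hpos hN
  have h1c : 1 ≤ c - c ^ 3 / s ^ 2 := by
    have hsT : T ^ 2 ≤ s ^ 2 := by nlinarith
    have h3 : c ^ 3 / s ^ 2 ≤ c - 1 := by
      rw [div_le_iff₀ (by positivity)]
      have hT2 : (c - 1) * T ^ 2 = c ^ 3 := by rw [hTsq, mul_div_cancel₀ _ (by linarith : c - (1:ℝ) ≠ 0)]
      have := mul_le_mul_of_nonneg_left hsT (by linarith : (0:ℝ) ≤ c - 1)
      linarith
    linarith
  calc (1 - 0) * P⁻¹ = 1 / P := by rw [one_div]; ring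
    _ ≤ (c - c ^ 3 / s ^ 2) / P := by gcongr
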